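/- Every periodic interval exchange transformation is a commutator in 𝒢: if g ∈ 𝒢 is periodic, then there exist a, b ∈ 𝒢 with g = a·b·a⁻¹·b⁻¹. -/

import Mathlib

open scoped commutatorElement

/-- `f` is an interval exchange transformation (IET) of `[0,1)`, viewed as a permutation of `ℝ`
that fixes every point outside `[0,1)`: there is a finite subdivision
`0 = a 0 < a 1 < … < a (m+1) = 1` such that `f` is a translation on each half-open
interval `[a i, a (i+1))`. -/
def IsIET (f : Equiv.Perm ℝ) : Prop :=
  (∀ x : ℝ, x ∉ Set.Ico (0 : ℝ) 1 → f x = x) ∧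
  ∃ (m : ℕ) (a : Fin (m + 2) → ℝ),
    a 0 = 0 ∧ a (Fin.last (m + 1)) = 1 ∧ StrictMono a ∧
    ∀ i : Fin (m + 1), ∃ c : ℝ, ∀ x ∈ Set.Ico (a i.castSucc) (a i.succ), f x = x + c

/-- `f` is an interval exchange transformation with flips (FIET) of `[0,1)`, viewed as a
permutation of `ℝ` fixing every point outside `[0,1)`: there is a finite subdivision
`0 = a 0 < a 1 < … < a (m+1) = 1` such that on each open interval `(a i, a (i+1))`, `f` is an
isometry, i.e. of the form `x ↦ x + c` or `x ↦ c - x`. -/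
def IsFIET (f : Equiv.Perm ℝ) : Prop :=
  (∀ x : ℝ, x ∉ Set.Ico (0 : ℝ) 1 → f x = x) ∧
  ∃ (m : ℕ) (a : Fin (m + 2) → ℝ),
    a 0 = 0 ∧ a (Fin.last (m + 1)) = 1 ∧ StrictMono a ∧
    ∀ i : Fin (m + 1),
      (∃ c : ℝ, ∀ x ∈ Set.Ioo (a i.castSucc) (a i.succ), f x = x + c) ∨
      (∃ c : ℝ, ∀ x ∈ Set.Ioo (a i.castSucc) (a i.succ), f x = c - x)

/-- Two permutations of `ℝ` agree outside a finite set; this is equality of the classes in the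
quotient group `𝒢̄` of FIETs modulo maps that are the identity off a finite set. -/
def FEq (f g : Equiv.Perm ℝ) : Prop := {x : ℝ | f x ≠ g x}.Finite

/-- The set of commutators `⁅a, b⁆ = a * b * a⁻¹ * b⁻¹` of interval exchange
transformations. -/
def IETCommutators : Set (Equiv.Perm ℝ) :=
  {x | ∃ a b : Equiv.Perm ℝ, IsIET a ∧ IsIET b ∧ x = ⁅a, b⁆}

/-- The set of commutators `⁅a, b⁆ = a * b * a⁻¹ * b⁻¹` of interval exchange
transformations with flips. -/
def FIETCommutators : Set (Equiv.Perm ℝ) :=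
  {x | ∃ a b : Equiv.Perm ℝ, IsFIET a ∧ IsFIET b ∧ x = ⁅a, b⁆}

/-- `g` is a product of at most `n` commutators of elements of the group `𝒢` of interval
exchange transformations; i.e. the commutator length of `g` in `𝒢` is at most `n`. -/
def IsProdOfIETCommutators (n : ℕ) (g : Equiv.Perm ℝ) : Prop :=
  ∃ l : List (Equiv.Perm ℝ), l.length ≤ n ∧ (∀ x ∈ l, x ∈ IETCommutators) ∧ g = l.prod

/-- `f ∈ 𝒢_m`: `f` is an IET of `[0,1)` admitting a subdivision into at most `m` half-open
intervals on each of which it is a translation. -/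
def MemGm (m : ℕ) (f : Equiv.Perm ℝ) : Prop :=
  (∀ x : ℝ, x ∉ Set.Ico (0 : ℝ) 1 → f x = x) ∧
  ∃ (k : ℕ) (a : Fin (k + 2) → ℝ), k + 1 ≤ m ∧
    a 0 = 0 ∧ a (Fin.last (k + 1)) = 1 ∧ StrictMono a ∧
    ∀ i : Fin (k + 1), ∃ c : ℝ, ∀ x ∈ Set.Ico (a i.castSucc) (a i.succ), f x = x + c

/-- `g` is periodic: every orbit `{gⁿ x : n ∈ ℤ}` is finite. -/
def IsPeriodicPerm (g : Equiv.Perm ℝ) : Prop :=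
  ∀ x : ℝ, (Set.range fun n : ℤ => (g ^ n) x).Finite

/-- `f` is a restricted rotation: for some half-open interval `J = [a, b) ⊆ [0,1)` and some
`α ∈ [0, b - a)`, `f` is the identity outside `J` and sends `x ∈ J` to
`a + ((x - a + α) mod (b - a))`. -/
def IsRestrictedRotation (f : Equiv.Perm ℝ) : Prop :=
  ∃ a b α : ℝ, 0 ≤ a ∧ a < b ∧ b ≤ 1 ∧ α ∈ Set.Ico (0 : ℝ) (b - a) ∧
    (∀ x : ℝ, x ∉ Set.Ico a b → f x = x) ∧
    ∀ x ∈ Set.Ico a b, f x = x + α - (b - a) * (⌊(x - a + α) / (b - a)⌋ : ℝ)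

/-- `Δ_α`: the additive subgroup of `ℝ` generated by `α 0, …, α (p-1)` and `1`. -/
def Delta {p : ℕ} (α : Fin p → ℝ) : AddSubgroup ℝ :=
  AddSubgroup.closure (Set.range α ∪ {1})

/-- `g ∈ Γ_α`: `g` is an IET all of whose discontinuity points (as a map of `[0,1)`)
belong to the subgroup `Δ`. -/
def MemGamma (Δ : AddSubgroup ℝ) (g : Equiv.Perm ℝ) : Prop :=
  IsIET g ∧
  ∀ x ∈ Set.Ico (0 : ℝ) 1, ¬ContinuousWithinAt (⇑g) (Set.Ico (0 : ℝ) 1) x → x ∈ Δ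

/-- `g ∈ Γ_α(J)` for `J = [c, d)`: `g` is an IET supported in `[c, d)` all of whose
discontinuity points belong to `Δ`. -/
def MemGammaJ (Δ : AddSubgroup ℝ) (c d : ℝ) (g : Equiv.Perm ℝ) : Prop :=
  IsIET g ∧ (∀ x : ℝ, x ∉ Set.Ico c d → g x = x) ∧
  ∀ x ∈ Set.Ico (0 : ℝ) 1, ¬ContinuousWithinAt (⇑g) (Set.Ico (0 : ℝ) 1) x → x ∈ Δ


/-! ## Auxiliary material for the proof -/

namespace PeriodicIETProof

set_option linter.unusedSectionVars false

lemma Equiv.Perm.apply_inv_self {α : Type*} (f : Equiv.Perm α) (x : α) : f (f⁻¹ x) = x :=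
  Equiv.apply_symm_apply f x

lemma Equiv.Perm.inv_apply_self {α : Type*} (f : Equiv.Perm α) (x : α) : f⁻¹ (f x) = x :=
  Equiv.symm_apply_apply f x

open scoped Classical

noncomputable section

/-! ### Next and previous points of a finite cut set -/

/-- The smallest element of `Z ∪ {1}` strictly greater than `z`. -/
def nxt (Z : Finset ℝ) (z : ℝ) : ℝ :=
  if h : ((insert (1:ℝ) Z).filter (fun w => z < w)).Nonempty then
    ((insert (1:ℝ) Z).filter (fun w => z < w)).min' h
  else 1

/-- The largest element of `Z` which is `≤ x` (junk value `0` otherwise). -/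
def prd (Z : Finset ℝ) (x : ℝ) : ℝ :=
  if h : (Z.filter (fun w => w ≤ x)).Nonempty then (Z.filter (fun w => w ≤ x)).max' h
  else 0

variable {Z : Finset ℝ} {z w x : ℝ}

lemma nxt_nonempty (hz : z < 1) : ((insert (1:ℝ) Z).filter (fun w => z < w)).Nonempty :=
  ⟨1, Finset.mem_filter.mpr ⟨Finset.mem_insert_self _ _, hz⟩⟩

lemma lt_nxt (hz : z < 1) : z < nxt Z z := by
  rw [nxt, dif_pos (nxt_nonempty hz)]
  exact (Finset.mem_filter.mp (Finset.min'_mem _ (nxt_nonempty hz))).2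

lemma nxt_mem (hz : z < 1) : nxt Z z ∈ insert (1:ℝ) Z := by
  rw [nxt, dif_pos (nxt_nonempty hz)]
  exact (Finset.mem_filter.mp (Finset.min'_mem _ (nxt_nonempty hz))).1

lemma nxt_le (hz : z < 1) (hw : w ∈ insert (1:ℝ) Z) (hzw : z < w) : nxt Z z ≤ w := by
  rw [nxt, dif_pos (nxt_nonempty hz)]
  exact Finset.min'_le _ _ (Finset.mem_filter.mpr ⟨hw, hzw⟩)

lemma nxt_le_one (hz : z < 1) : nxt Z z ≤ 1 :=
  nxt_le hz (Finset.mem_insert_self _ _) hz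

/-- Two gaps meeting in a point coincide. -/
lemma gap_eq (hz : z ∈ Z) (hw : w ∈ Z) (hz1 : z < 1) (hw1 : w < 1)
    (hx : x ∈ Set.Ico z (nxt Z z)) (hx' : x ∈ Set.Ico w (nxt Z w)) : z = w := by
  rcases lt_trichotomy z w with h | h | h
  · have := nxt_le hz1 (Finset.mem_insert_of_mem hw) h
    have h1 := hx.2; have h2 := hx'.1; linarith
  · exact h
  · have := nxt_le hw1 (Finset.mem_insert_of_mem hz) h
    have h1 := hx'.2; have h2 := hx.1; linarith

lemma prd_nonempty (h0 : (0:ℝ) ∈ Z) (hx : 0 ≤ x) : (Z.filter (fun w => w ≤ x)).Nonempty :=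
  ⟨0, Finset.mem_filter.mpr ⟨h0, hx⟩⟩

lemma prd_mem (h0 : (0:ℝ) ∈ Z) (hx : 0 ≤ x) : prd Z x ∈ Z := by
  rw [prd, dif_pos (prd_nonempty h0 hx)]
  exact (Finset.mem_filter.mp (Finset.max'_mem _ (prd_nonempty h0 hx))).1

lemma prd_le (h0 : (0:ℝ) ∈ Z) (hx : 0 ≤ x) : prd Z x ≤ x := by
  rw [prd, dif_pos (prd_nonempty h0 hx)]
  exact (Finset.mem_filter.mp (Finset.max'_mem _ (prd_nonempty h0 hx))).2

lemma le_prd (h0 : (0:ℝ) ∈ Z) (hx : 0 ≤ x) (hw : w ∈ Z) (hwx : w ≤ x) : w ≤ prd Z x := by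
  rw [prd, dif_pos (prd_nonempty h0 hx)]
  apply Finset.le_max'
  exact Finset.mem_filter.mpr ⟨hw, hwx⟩

lemma lt_nxt_prd (h0 : (0:ℝ) ∈ Z) (hsub : ∀ z ∈ Z, z ∈ Set.Ico (0:ℝ) 1)
    (hx : x ∈ Set.Ico (0:ℝ) 1) : x < nxt Z (prd Z x) := by
  by_contra hc
  push_neg at hc
  have h1 : prd Z x < 1 := (hsub _ (prd_mem h0 hx.1)).2
  rcases Finset.mem_insert.mp (nxt_mem (Z := Z) h1) with he | hm
  · rw [he] at hc; linarith [hx.2]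
  · have h2 := le_prd h0 hx.1 hm hc
    linarith [lt_nxt (Z := Z) h1]


/-! ### A reversing permutation -/

section Theta

variable {α : Type*} [Fintype α] [LinearOrder α] (σ : Equiv.Perm α)

/-- The orbit (cycle) of `z` under `σ`, as a finset. -/
def orbF (z : α) : Finset α := Finset.univ.filter (fun w => σ.SameCycle z w)

lemma orbF_nonempty (z : α) : (orbF σ z).Nonempty :=
  ⟨z, Finset.mem_filter.mpr ⟨Finset.mem_univ _, Equiv.Perm.SameCycle.refl σ z⟩⟩

/-- The base point of the orbit of `z`: its smallest element. -/
def bpt (z : α) : α := (orbF σ z).min' (orbF_nonempty σ z)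

lemma sameCycle_bpt (z : α) : σ.SameCycle z (bpt σ z) :=
  (Finset.mem_filter.mp (Finset.min'_mem _ (orbF_nonempty σ z))).2

lemma bpt_congr {z w : α} (h : σ.SameCycle z w) : bpt σ z = bpt σ w := by
  have horb : orbF σ z = orbF σ w := by
    ext u
    simp only [orbF, Finset.mem_filter, Finset.mem_univ, true_and]
    exact ⟨fun hu => h.symm.trans hu, fun hu => h.trans hu⟩
  refine le_antisymm ?_ ?_
  · apply Finset.min'_le
    rw [horb]
    exact Finset.min'_mem _ _
  · apply Finset.min'_le
    rw [← horb]
    exact Finset.min'_mem _ _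

lemma exists_pow_bpt (z : α) : ∃ n : ℕ, (σ ^ n) (bpt σ z) = z := by
  obtain ⟨i, _, hi⟩ := (sameCycle_bpt σ z).symm.exists_pow_eq'
  exact ⟨i, hi⟩

/-- The position of `z` in its orbit, relative to the base point. -/
def idx (z : α) : ℕ := Nat.find (exists_pow_bpt σ z)

lemma idx_spec (z : α) : (σ ^ (idx σ z : ℤ)) (bpt σ z) = z := by
  rw [zpow_natCast]
  exact Nat.find_spec (exists_pow_bpt σ z)

/-- The reversing map: `σ^i b ↦ σ^(-i) b` where `b` is the base point of the orbit. -/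
def thetaF (z : α) : α := (σ ^ (-(idx σ z : ℤ))) (bpt σ z)

lemma sameCycle_thetaF (z : α) : σ.SameCycle z (thetaF σ z) :=
  (sameCycle_bpt σ z).trans ⟨-(idx σ z : ℤ), rfl⟩

/-- Shift an equation `σ^x B = σ^y B` by `t`. -/
lemma zpow_shift {B : α} {x y : ℤ} (h : (σ ^ x) B = (σ ^ y) B) (t : ℤ) :
    (σ ^ (t + x)) B = (σ ^ (t + y)) B := by
  rw [zpow_add, zpow_add, Equiv.Perm.mul_apply, Equiv.Perm.mul_apply, h]

lemma thetaF_injective : Function.Injective (thetaF σ) := by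
  intro z w h
  have hzw : σ.SameCycle z w := by
    have t1 : σ.SameCycle (thetaF σ z) w := by
      rw [h]; exact (sameCycle_thetaF σ w).symm
    exact (sameCycle_thetaF σ z).trans t1
  have hb : bpt σ z = bpt σ w := bpt_congr σ hzw
  have h' : (σ ^ (-(idx σ z : ℤ))) (bpt σ z) = (σ ^ (-(idx σ w : ℤ))) (bpt σ z) := by
    rw [thetaF, thetaF, ← hb] at h; exact h
  have h2 := zpow_shift σ h' ((idx σ z : ℤ) + (idx σ w : ℤ))
  have e1 : (idx σ z : ℤ) + (idx σ w : ℤ) + -(idx σ z : ℤ) = (idx σ w : ℤ) := by ring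
  have e2 : (idx σ z : ℤ) + (idx σ w : ℤ) + -(idx σ w : ℤ) = (idx σ z : ℤ) := by ring
  rw [e1, e2] at h2
  -- h2 : σ^(idx w) (bpt z) = σ^(idx z) (bpt z)
  have hzz := idx_spec σ z
  have hww := idx_spec σ w
  rw [← hb] at hww
  rw [hww, hzz] at h2
  exact h2.symm

/-- The reversing permutation of the orbits of `σ`. -/
def theta : Equiv.Perm α :=
  Equiv.ofBijective (thetaF σ) (Finite.injective_iff_bijective.mp (thetaF_injective σ))

lemma theta_apply (z : α) : theta σ z = (σ ^ (-(idx σ z : ℤ))) (bpt σ z) := rfl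

lemma theta_sigma (z : α) : theta σ (σ z) = σ⁻¹ (theta σ z) := by
  have hb : bpt σ (σ z) = bpt σ z := by
    refine bpt_congr σ ?_
    exact ⟨-1, by simp⟩
  have h1 : (σ ^ (idx σ (σ z) : ℤ)) (bpt σ z) = σ z := by
    have := idx_spec σ (σ z); rwa [hb] at this
  have h2 : (σ ^ (idx σ z : ℤ)) (bpt σ z) = z := idx_spec σ z
  set a : ℤ := (idx σ z : ℤ) with ha
  set c : ℤ := (idx σ (σ z) : ℤ) with hc
  have h3 : (σ ^ c) (bpt σ z) = (σ ^ (1 + a)) (bpt σ z) := by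
    rw [h1, zpow_add, zpow_one, Equiv.Perm.mul_apply, h2]
  have h4 := zpow_shift σ h3 (-1 - a - c)
  have e1 : (-1 - a - c) + c = -1 + -a := by ring
  have e2 : (-1 - a - c) + (1 + a) = -c := by ring
  rw [e1, e2] at h4
  -- h4 : σ^(-1 + -a) (bpt z) = σ^(-c) (bpt z)
  show (σ ^ (-c)) (bpt σ (σ z)) = σ⁻¹ ((σ ^ (-a)) (bpt σ z))
  rw [hb, ← h4, zpow_add, Equiv.Perm.mul_apply, zpow_neg_one]

lemma theta_sigma_inv (z : α) : theta σ (σ⁻¹ z) = σ (theta σ z) := by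
  have h := theta_sigma σ (σ⁻¹ z)
  rw [Equiv.Perm.apply_inv_self] at h
  rw [h, Equiv.Perm.apply_inv_self]

lemma zpow_invariant {β : Sort*} (L : α → β) (hL : ∀ w, L (σ w) = L w) :
    ∀ (n : ℤ) (w : α), L ((σ ^ n) w) = L w := by
  have hinv : ∀ w, L (σ⁻¹ w) = L w := fun w => by
    have := hL (σ⁻¹ w); rw [Equiv.Perm.apply_inv_self] at this; exact this.symm
  intro n
  induction n using Int.induction_on with
  | zero => intro w; simp
  | succ k ih =>
    intro w
    have h : (σ ^ ((k : ℤ) + 1)) w = (σ ^ (k : ℤ)) (σ w) := by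
      rw [zpow_add_one, Equiv.Perm.mul_apply]
    rw [h, ih, hL]
  | pred k ih =>
    intro w
    have h : (σ ^ (-(k : ℤ) - 1)) w = (σ ^ (-(k : ℤ))) (σ⁻¹ w) := by
      rw [zpow_sub_one, Equiv.Perm.mul_apply]
    rw [h, ih, hinv]

lemma theta_invariant {β : Sort*} (L : α → β) (hL : ∀ w, L (σ w) = L w) (z : α) :
    L (theta σ z) = L z := by
  have h1 : L (theta σ z) = L (bpt σ z) := zpow_invariant σ L hL _ _
  have h2 : L z = L (bpt σ z) := by
    conv_lhs => rw [← idx_spec σ z]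
    exact zpow_invariant σ L hL _ _
  rw [h1, h2]

lemma theta_symm_invariant {β : Sort*} (L : α → β) (hL : ∀ w, L (σ w) = L w) (z : α) :
    L ((theta σ).symm z) = L z := by
  have := theta_invariant σ L hL ((theta σ).symm z)
  rw [Equiv.apply_symm_apply] at this; exact this.symm

/-! ### The index-level permutations -/

/-- The permutation acting as `σ` on the `false` level and trivially on the `true` level. -/
def permA : Equiv.Perm (α × Bool) where
  toFun := fun p => (cond p.2 p.1 (σ p.1), p.2)
  invFun := fun p => (cond p.2 p.1 (σ⁻¹ p.1), p.2)
  left_inv := by rintro ⟨z, (_ | _)⟩ <;> simp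
  right_inv := by rintro ⟨z, (_ | _)⟩ <;> simp

/-- The involution exchanging the two levels via the reversing permutation. -/
def permB : Equiv.Perm (α × Bool) :=
  Function.Involutive.toPerm
    (fun p => cond p.2 ((theta σ).symm p.1, false) (theta σ p.1, true))
    (by rintro ⟨z, (_ | _)⟩ <;> simp)

lemma permA_false (z : α) : permA σ (z, false) = (σ z, false) := rfl
lemma permA_true (z : α) : permA σ (z, true) = (z, true) := rfl
lemma permA_inv_false (z : α) : (permA σ)⁻¹ (z, false) = (σ⁻¹ z, false) := rfl
lemma permA_inv_true (z : α) : (permA σ)⁻¹ (z, true) = (z, true) := rfl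
lemma permB_false (z : α) : permB σ (z, false) = (theta σ z, true) := rfl
lemma permB_true (z : α) : permB σ (z, true) = ((theta σ).symm z, false) := rfl
lemma permB_inv : (permB σ)⁻¹ = permB σ := rfl

/-- The key commutator identity at the index level. -/
lemma comm_eq :
    permA σ * permB σ * (permA σ)⁻¹ * (permB σ)⁻¹ =
      Equiv.prodCongr σ (Equiv.refl Bool) := by
  apply Equiv.ext
  rintro ⟨z, (_ | _)⟩
  · show (permA σ) ((permB σ) ((permA σ)⁻¹ ((permB σ)⁻¹ (z, false)))) = (σ z, false)
    rw [permB_inv, permB_false, permA_inv_true, permB_true, Equiv.symm_apply_apply,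
      permA_false]
  · show (permA σ) ((permB σ) ((permA σ)⁻¹ ((permB σ)⁻¹ (z, true)))) = (σ z, true)
    rw [permB_inv, permB_true, permA_inv_false, permB_false, theta_sigma_inv,
      Equiv.apply_symm_apply, permA_true]

end Theta


/-! ### Gap systems -/

/-- A `g`-invariant finite cut set for which `g` translates each gap. -/
structure GS (g : Equiv.Perm ℝ) (Z : Finset ℝ) : Prop where
  zero_mem : (0:ℝ) ∈ Z
  sub : ∀ z ∈ Z, z ∈ Set.Ico (0:ℝ) 1
  fix : ∀ x : ℝ, x ∉ Set.Ico (0:ℝ) 1 → g x = x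
  mapZ : ∀ z ∈ Z, g z ∈ Z
  invZ : ∀ z ∈ Z, g⁻¹ z ∈ Z
  gap_trans : ∀ z ∈ Z, ∀ x ∈ Set.Ico z (nxt Z z), g x = x + (g z - z)

namespace GS

variable {g : Equiv.Perm ℝ} {Z : Finset ℝ} {z w x : ℝ}

lemma mem_Ico_iff (h : GS g Z) (x : ℝ) :
    g x ∈ Set.Ico (0:ℝ) 1 ↔ x ∈ Set.Ico (0:ℝ) 1 := by
  constructor
  · intro hx
    by_contra hc
    rw [h.fix x hc] at hx
    exact hc hx
  · intro hx
    by_contra hc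
    have h2 : g (g x) = g x := h.fix _ hc
    have h3 := g.injective h2
    rw [h3] at hc
    exact hc hx

lemma lt_one (h : GS g Z) (hz : z ∈ Z) : z < 1 := (h.sub z hz).2

lemma image_le_one (h : GS g Z) (hz : z ∈ Z) : g z + (nxt Z z - z) ≤ 1 := by
  by_contra hc
  push_neg at hc
  set t := max z (1 - (g z - z)) with ht
  have htz : z ≤ t := le_max_left _ _
  have ht1 : t < nxt Z z := by
    apply max_lt (lt_nxt (h.lt_one hz))
    linarith
  have hgt := h.gap_trans z hz t ⟨htz, ht1⟩
  have htI : t ∈ Set.Ico (0:ℝ) 1 :=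
    ⟨le_trans (h.sub z hz).1 htz, lt_of_lt_of_le ht1 (nxt_le_one (h.lt_one hz))⟩
  have hgtI : g t ∈ Set.Ico (0:ℝ) 1 := (h.mem_Ico_iff t).mpr htI
  have hge : (1:ℝ) ≤ g t := by
    rw [hgt]
    have := le_max_right z (1 - (g z - z))
    linarith
  linarith [hgtI.2]

lemma no_break (h : GS g Z) (hz : z ∈ Z) (hw : w ∈ insert (1:ℝ) Z) (h1 : g z < w) :
    g z + (nxt Z z - z) ≤ w := by
  by_contra hc
  push_neg at hc
  rcases Finset.mem_insert.mp hw with rfl | hwZ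
  · linarith [h.image_le_one hz]
  · set v := w - (g z - z) with hv
    have hv1 : z < v := by simp only [hv]; linarith
    have hv2 : v < nxt Z z := by simp only [hv]; linarith
    have hgv : g v = w := by
      rw [h.gap_trans z hz v ⟨le_of_lt hv1, hv2⟩]; simp only [hv]; ring
    have hvinv : g⁻¹ w = v := by rw [← hgv, Equiv.Perm.inv_apply_self]
    have hvZ : v ∈ Z := hvinv ▸ h.invZ w hwZ
    have := nxt_le (h.lt_one hz) (Finset.mem_insert_of_mem hvZ) hv1
    linarith

lemma len_eq (h : GS g Z) (hz : z ∈ Z) : nxt Z (g z) - g z = nxt Z z - z := by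
  have hgz : g z ∈ Z := h.mapZ z hz
  have hgz1 : g z < 1 := h.lt_one hgz
  have hge : g z + (nxt Z z - z) ≤ nxt Z (g z) :=
    h.no_break hz (nxt_mem hgz1) (lt_nxt hgz1)
  by_contra hne
  have hgt : g z + (nxt Z z - z) < nxt Z (g z) :=
    lt_of_le_of_ne hge (fun heq => hne (by linarith))
  set y := g z + (nxt Z z - z) with hy
  have hy1 : y ≤ 1 := h.image_le_one hz
  have hylt : y < 1 := by
    rcases eq_or_lt_of_le hy1 with he | hl
    · exfalso; rw [he] at hgt; linarith [nxt_le_one (Z := Z) hgz1]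
    · exact hl
  have hy0 : (0:ℝ) ≤ y := by
    have h5 := lt_nxt (Z := Z) (h.lt_one hz)
    have h6 := (h.sub _ hgz).1
    simp only [hy]; linarith
  set x := g⁻¹ y with hx
  have hgxy : g x = y := by rw [hx, Equiv.Perm.apply_inv_self]
  have hxI : x ∈ Set.Ico (0:ℝ) 1 := by
    apply (h.mem_Ico_iff x).mp
    rw [hgxy]
    exact ⟨hy0, hylt⟩
  set u := prd Z x with hu
  have huZ : u ∈ Z := prd_mem h.zero_mem hxI.1
  have hux : u ≤ x := prd_le h.zero_mem hxI.1
  have hxu : x < nxt Z u := lt_nxt_prd h.zero_mem h.sub hxI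
  have hgx : g x = x + (g u - u) := h.gap_trans u huZ x ⟨hux, hxu⟩
  have hguZ : g u ∈ Z := h.mapZ u huZ
  have hyu : y ∈ Set.Ico (g u) (nxt Z (g u)) := by
    constructor
    · rw [← hgxy, hgx]; linarith
    · have h2 := h.no_break huZ (nxt_mem (h.lt_one hguZ)) (lt_nxt (h.lt_one hguZ))
      rw [← hgxy, hgx]; linarith
  have hyz : y ∈ Set.Ico (g z) (nxt Z (g z)) := by
    refine ⟨?_, hgt⟩
    have h5 := lt_nxt (Z := Z) (h.lt_one hz)
    simp only [hy]; linarith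
  have hguz : (g u : ℝ) = g z := gap_eq hguZ hgz (h.lt_one hguZ) hgz1 hyu hyz
  have huz : u = z := g.injective hguz
  rw [huz] at hgx hxu
  have hxn : x = nxt Z z := by
    rw [hgx] at hgxy
    simp only [hy] at hgxy
    linarith
  linarith [hxu, hxn.ge, hxn.le]

end GS


/-! ### Pieces: half-gaps of a cut set, and piecewise translations -/

section Pieces

variable {Z : Finset ℝ}

/-- Left endpoint of a half-gap. `(z, false)` is the left half, `(z, true)` the right half. -/
def pcLeft (Z : Finset ℝ) (p : {x // x ∈ Z} × Bool) : ℝ :=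
  cond p.2 (((p.1 : ℝ) + nxt Z p.1) / 2) (p.1 : ℝ)

/-- Length of a half-gap. -/
def pcLen (Z : Finset ℝ) (p : {x // x ∈ Z} × Bool) : ℝ :=
  (nxt Z (p.1 : ℝ) - (p.1 : ℝ)) / 2

/-- A half-gap, as a half-open interval. -/
def Pc (Z : Finset ℝ) (p : {x // x ∈ Z} × Bool) : Set ℝ :=
  Set.Ico (pcLeft Z p) (pcLeft Z p + pcLen Z p)

lemma Pc_subset_gap {p : {x // x ∈ Z} × Bool} (h1 : (p.1 : ℝ) < 1) :
    Pc Z p ⊆ Set.Ico (p.1 : ℝ) (nxt Z (p.1 : ℝ)) := by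
  obtain ⟨z, b⟩ := p
  have hn := lt_nxt (Z := Z) h1
  intro x hx
  simp only [Pc, pcLeft, pcLen, Set.mem_Ico] at hx ⊢
  cases b <;> simp only [cond_true, cond_false] at hx <;>
    exact ⟨by linarith [hx.1, hx.2, hn], by linarith [hx.1, hx.2, hn]⟩

lemma Pc_unique (hsub : ∀ z ∈ Z, z ∈ Set.Ico (0:ℝ) 1) {p q : {x // x ∈ Z} × Bool} {x : ℝ}
    (hx : x ∈ Pc Z p) (hx' : x ∈ Pc Z q) : p = q := by
  have h1 : (p.1 : ℝ) < 1 := (hsub _ p.1.2).2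
  have h2 : (q.1 : ℝ) < 1 := (hsub _ q.1.2).2
  have hzz : (p.1 : ℝ) = q.1 :=
    gap_eq p.1.2 q.1.2 h1 h2 (Pc_subset_gap h1 hx) (Pc_subset_gap h2 hx')
  obtain ⟨z, b⟩ := p
  obtain ⟨w, c⟩ := q
  have hz : z = w := Subtype.ext hzz
  subst hz
  have hn := lt_nxt (Z := Z) h1
  cases b <;> cases c
  · rfl
  · exfalso
    simp only [Pc, pcLeft, pcLen, Set.mem_Ico, cond_true, cond_false] at hx hx'
    linarith [hx.1, hx.2, hx'.1, hx'.2]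
  · exfalso
    simp only [Pc, pcLeft, pcLen, Set.mem_Ico, cond_true, cond_false] at hx hx'
    linarith [hx.1, hx.2, hx'.1, hx'.2]
  · rfl

lemma Pc_sub_Ico01 (hsub : ∀ z ∈ Z, z ∈ Set.Ico (0:ℝ) 1) {p : {x // x ∈ Z} × Bool} :
    Pc Z p ⊆ Set.Ico (0:ℝ) 1 := by
  intro x hx
  have h1 := hsub _ p.1.2
  have h2 := Pc_subset_gap h1.2 hx
  exact ⟨le_trans h1.1 h2.1, lt_of_lt_of_le h2.2 (nxt_le_one h1.2)⟩

/-- The piecewise translation of `ℝ` induced by a permutation of the half-gaps. -/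
def fF (Z : Finset ℝ) (π : Equiv.Perm ({x // x ∈ Z} × Bool)) (x : ℝ) : ℝ :=
  if h : ∃ p, x ∈ Pc Z p then x - pcLeft Z h.choose + pcLeft Z (π h.choose) else x

lemma fF_of_mem (hsub : ∀ z ∈ Z, z ∈ Set.Ico (0:ℝ) 1)
    {π : Equiv.Perm ({x // x ∈ Z} × Bool)} {x : ℝ} {p : {x // x ∈ Z} × Bool}
    (hx : x ∈ Pc Z p) : fF Z π x = x - pcLeft Z p + pcLeft Z (π p) := by
  have h : ∃ q, x ∈ Pc Z q := ⟨p, hx⟩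
  rw [fF, dif_pos h]
  have he : h.choose = p := Pc_unique hsub h.choose_spec hx
  rw [he]

lemma fF_of_not {π : Equiv.Perm ({x // x ∈ Z} × Bool)} {x : ℝ}
    (hx : ∀ p, x ∉ Pc Z p) : fF Z π x = x := by
  rw [fF, dif_neg (not_exists.mpr hx)]

lemma fF_mem_image {π : Equiv.Perm ({x // x ∈ Z} × Bool)} {p : {x // x ∈ Z} × Bool} {x : ℝ}
    (hlen : pcLen Z (π p) = pcLen Z p) (hx : x ∈ Pc Z p) :
    x - pcLeft Z p + pcLeft Z (π p) ∈ Pc Z (π p) := by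
  obtain ⟨h1, h2⟩ := hx
  refine ⟨by linarith, ?_⟩
  show x - pcLeft Z p + pcLeft Z (π p) < pcLeft Z (π p) + pcLen Z (π p)
  rw [hlen]
  linarith

/-- `π` preserves the lengths of the half-gaps. -/
def LenPres (Z : Finset ℝ) (π : Equiv.Perm ({x // x ∈ Z} × Bool)) : Prop :=
  ∀ p, pcLen Z (π p) = pcLen Z p

lemma LenPres.inv {π : Equiv.Perm ({x // x ∈ Z} × Bool)} (h : LenPres Z π) :
    LenPres Z π⁻¹ := fun p => by
  have h2 := h (π⁻¹ p)
  rw [Equiv.Perm.apply_inv_self] at h2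
  exact h2.symm

lemma LenPres.mul {π ρ : Equiv.Perm ({x // x ∈ Z} × Bool)} (h1 : LenPres Z π)
    (h2 : LenPres Z ρ) : LenPres Z (π * ρ) :=
  fun p => (h1 (ρ p)).trans (h2 p)

lemma fF_left_inverse (hsub : ∀ z ∈ Z, z ∈ Set.Ico (0:ℝ) 1)
    {π : Equiv.Perm ({x // x ∈ Z} × Bool)} (hπ : LenPres Z π) (x : ℝ) :
    fF Z π⁻¹ (fF Z π x) = x := by
  by_cases h : ∃ p, x ∈ Pc Z p
  · obtain ⟨p, hp⟩ := h
    rw [fF_of_mem hsub hp, fF_of_mem hsub (fF_mem_image (hπ p) hp),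
      Equiv.Perm.inv_apply_self]
    ring
  · push_neg at h
    rw [fF_of_not h, fF_of_not h]

/-- The permutation of `ℝ` induced by a length-preserving permutation of the half-gaps. -/
def FP (Z : Finset ℝ) (hsub : ∀ z ∈ Z, z ∈ Set.Ico (0:ℝ) 1)
    (π : Equiv.Perm ({x // x ∈ Z} × Bool)) (hπ : LenPres Z π) : Equiv.Perm ℝ where
  toFun := fF Z π
  invFun := fF Z π⁻¹
  left_inv := fF_left_inverse hsub hπ
  right_inv := fun x => by
    have h := fF_left_inverse hsub hπ.inv x
    rwa [inv_inv] at h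

lemma FP_apply (hsub : ∀ z ∈ Z, z ∈ Set.Ico (0:ℝ) 1)
    (π : Equiv.Perm ({x // x ∈ Z} × Bool)) (hπ : LenPres Z π) (x : ℝ) :
    FP Z hsub π hπ x = fF Z π x := rfl

lemma FP_inv (hsub : ∀ z ∈ Z, z ∈ Set.Ico (0:ℝ) 1)
    (π : Equiv.Perm ({x // x ∈ Z} × Bool)) (hπ : LenPres Z π) :
    (FP Z hsub π hπ)⁻¹ = FP Z hsub π⁻¹ hπ.inv :=
  Equiv.ext fun _ => rfl

lemma FP_mul (hsub : ∀ z ∈ Z, z ∈ Set.Ico (0:ℝ) 1)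
    (π ρ : Equiv.Perm ({x // x ∈ Z} × Bool)) (hπ : LenPres Z π) (hρ : LenPres Z ρ) :
    FP Z hsub π hπ * FP Z hsub ρ hρ = FP Z hsub (π * ρ) (hπ.mul hρ) := by
  apply Equiv.ext
  intro x
  show fF Z π (fF Z ρ x) = fF Z (π * ρ) x
  by_cases h : ∃ p, x ∈ Pc Z p
  · obtain ⟨p, hp⟩ := h
    rw [fF_of_mem (π := π * ρ) hsub hp, fF_of_mem (π := ρ) hsub hp,
      fF_of_mem (π := π) hsub (fF_mem_image (hρ p) hp), Equiv.Perm.mul_apply]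
    ring
  · push_neg at h
    rw [fF_of_not h, fF_of_not h, fF_of_not h]

lemma FP_congr (hsub : ∀ z ∈ Z, z ∈ Set.Ico (0:ℝ) 1)
    {π ρ : Equiv.Perm ({x // x ∈ Z} × Bool)} (h : π = ρ) (hπ : LenPres Z π)
    (hρ : LenPres Z ρ) : FP Z hsub π hπ = FP Z hsub ρ hρ := by
  subst h; rfl

lemma exists_Pc (h0 : (0:ℝ) ∈ Z) (hsub : ∀ z ∈ Z, z ∈ Set.Ico (0:ℝ) 1) {x : ℝ}
    (hx : x ∈ Set.Ico (0:ℝ) 1) : ∃ p, x ∈ Pc Z p := by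
  set z := prd Z x with hzdef
  have hz : z ∈ Z := prd_mem h0 hx.1
  have h1 : z ≤ x := prd_le h0 hx.1
  have h2 : x < nxt Z z := lt_nxt_prd h0 hsub hx
  by_cases hside : x < (z + nxt Z z) / 2
  · refine ⟨(⟨z, hz⟩, false), ?_, ?_⟩
    · exact h1
    · show x < (z : ℝ) + (nxt Z z - z) / 2
      linarith
  · push_neg at hside
    refine ⟨(⟨z, hz⟩, true), ?_, ?_⟩
    · exact hside
    · show x < (z + nxt Z z) / 2 + (nxt Z z - z) / 2
      linarith

end Pieces


/-! ### `FP` is an interval exchange transformation -/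

lemma isIET_FP {Z : Finset ℝ} (h0 : (0:ℝ) ∈ Z) (hsub : ∀ z ∈ Z, z ∈ Set.Ico (0:ℝ) 1)
    (π : Equiv.Perm ({x // x ∈ Z} × Bool)) (hπ : LenPres Z π) :
    IsIET (FP Z hsub π hπ) := by
  constructor
  · intro x hx
    have h : ∀ p, x ∉ Pc Z p := fun p hp => hx (Pc_sub_Ico01 hsub hp)
    exact fF_of_not h
  · set E : Finset ℝ := insert (0:ℝ) (insert 1 (Z ∪ Z.image (fun z => (z + nxt Z z) / 2)))
      with hE
    have h0E : (0:ℝ) ∈ E := Finset.mem_insert_self _ _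
    have h1E : (1:ℝ) ∈ E := Finset.mem_insert_of_mem (Finset.mem_insert_self _ _)
    have hZE : ∀ z ∈ Z, z ∈ E := fun z hz =>
      Finset.mem_insert_of_mem (Finset.mem_insert_of_mem (Finset.mem_union_left _ hz))
    have hmidE : ∀ z ∈ Z, (z + nxt Z z) / 2 ∈ E := fun z hz =>
      Finset.mem_insert_of_mem (Finset.mem_insert_of_mem
        (Finset.mem_union_right _ (Finset.mem_image_of_mem _ hz)))
    have hEIcc : ∀ e ∈ E, e ∈ Set.Icc (0:ℝ) 1 := by
      intro e he
      rcases Finset.mem_insert.mp he with rfl | he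
      · exact ⟨le_refl 0, zero_le_one⟩
      rcases Finset.mem_insert.mp he with rfl | he
      · exact ⟨zero_le_one, le_refl 1⟩
      rcases Finset.mem_union.mp he with he | he
      · exact ⟨(hsub e he).1, le_of_lt (hsub e he).2⟩
      · obtain ⟨z, hz, rfl⟩ := Finset.mem_image.mp he
        have h1 := (hsub z hz).1
        have h2 := (hsub z hz).2
        have h3 := lt_nxt (Z := Z) h2
        have h4 := nxt_le_one (Z := Z) h2
        constructor <;> [linarith; linarith]
    have hpcl : ∀ p : {x // x ∈ Z} × Bool, pcLeft Z p ∈ E := by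
      rintro ⟨⟨z, hz⟩, (_ | _)⟩
      · exact hZE z hz
      · exact hmidE z hz
    have hpcr : ∀ p : {x // x ∈ Z} × Bool, pcLeft Z p + pcLen Z p ∈ E := by
      rintro ⟨⟨z, hz⟩, (_ | _)⟩
      · have he : (z : ℝ) + (nxt Z z - z) / 2 = (z + nxt Z z) / 2 := by ring
        show (z : ℝ) + (nxt Z z - z) / 2 ∈ E
        rw [he]
        exact hmidE z hz
      · show ((z : ℝ) + nxt Z z) / 2 + (nxt Z z - z) / 2 ∈ E
        have he : ((z : ℝ) + nxt Z z) / 2 + (nxt Z z - z) / 2 = nxt Z z := by ring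
        rw [he]
        rcases Finset.mem_insert.mp (nxt_mem (Z := Z) (hsub z hz).2) with he1 | hm
        · rw [he1]; exact h1E
        · exact hZE _ hm
    have hcard : E.card = (E.card - 2) + 2 := by
      have : 1 < E.card := Finset.one_lt_card.mpr ⟨0, h0E, 1, h1E, by norm_num⟩
      omega
    have hmono : StrictMono (fun i : Fin (E.card - 2 + 2) => (E.orderEmbOfFin hcard) i) :=
      (E.orderEmbOfFin hcard).strictMono
    have hmemE : ∀ i, (E.orderEmbOfFin hcard) i ∈ E := fun i =>
      Finset.orderEmbOfFin_mem E hcard i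
    have hsurj : ∀ e ∈ E, ∃ k, (E.orderEmbOfFin hcard) k = e := by
      intro e he
      have h2 : e ∈ Set.range (E.orderEmbOfFin hcard) := by
        rw [Finset.range_orderEmbOfFin]
        exact he
      exact h2
    refine ⟨E.card - 2, fun i => (E.orderEmbOfFin hcard) i, ?_, ?_, hmono, ?_⟩
    · -- value 0
      obtain ⟨k, hk⟩ := hsurj 0 h0E
      have ha : (E.orderEmbOfFin hcard) 0 ≤ 0 := by
        rw [← hk]
        exact hmono.monotone (Fin.zero_le k)
      exact le_antisymm ha (hEIcc _ (hmemE 0)).1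
    · -- value 1
      obtain ⟨k, hk⟩ := hsurj 1 h1E
      have ha : (1:ℝ) ≤ (E.orderEmbOfFin hcard) (Fin.last _) := by
        rw [← hk]
        exact hmono.monotone (Fin.le_last k)
      exact le_antisymm (hEIcc _ (hmemE _)).2 ha
    · intro i
      set u := (E.orderEmbOfFin hcard) i.castSucc with hu
      set v := (E.orderEmbOfFin hcard) i.succ with hv
      have hcons : ∀ e ∈ E, ¬(u < e ∧ e < v) := by
        rintro e he ⟨hlt1, hlt2⟩
        obtain ⟨k, rfl⟩ := hsurj e he
        have hk1 : i.castSucc < k := hmono.lt_iff_lt.mp hlt1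
        have hk2 : k < i.succ := hmono.lt_iff_lt.mp hlt2
        have h3 := Fin.castSucc_lt_iff_succ_le.mp hk1
        exact absurd hk2 (not_lt.mpr h3)
      by_cases hcase : ∃ p, u ∈ Pc Z p
      · obtain ⟨p, hp⟩ := hcase
        refine ⟨pcLeft Z (π p) - pcLeft Z p, ?_⟩
        intro x hx
        have hxp : x ∈ Pc Z p := by
          refine ⟨le_trans hp.1 hx.1, ?_⟩
          by_contra hcc
          push_neg at hcc
          exact hcons _ (hpcr p) ⟨hp.2, lt_of_le_of_lt hcc hx.2⟩
        rw [FP_apply, fF_of_mem hsub hxp]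
        ring
      · push_neg at hcase
        refine ⟨0, fun x hx => ?_⟩
        have hnp : ∀ p, x ∉ Pc Z p := by
          intro p hp
          by_cases hl : pcLeft Z p ≤ u
          · exact hcase p ⟨hl, lt_of_le_of_lt hx.1 hp.2⟩
          · push_neg at hl
            exact hcons _ (hpcl p) ⟨hl, lt_of_le_of_lt hp.1 hx.2⟩
        rw [FP_apply, fF_of_not hnp, add_zero]


/-! ### The main construction -/

lemma GS.commutator {g : Equiv.Perm ℝ} {Z : Finset ℝ} (hgs : GS g Z) :
    ∃ a b : Equiv.Perm ℝ, IsIET a ∧ IsIET b ∧ g = ⁅a, b⁆ := by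
  have h0 := hgs.zero_mem
  have hsub := hgs.sub
  -- the permutation of the cut set induced by `g`
  have hbij : Function.Bijective (fun z : {x // x ∈ Z} => (⟨g z, hgs.mapZ z z.2⟩ : {x // x ∈ Z})) :=
    Finite.injective_iff_bijective.mp
      (fun z w hzw => Subtype.ext (g.injective (congrArg Subtype.val hzw)))
  set σ : Equiv.Perm {x // x ∈ Z} := Equiv.ofBijective _ hbij with hσdef
  have hσ : ∀ z : {x // x ∈ Z}, (σ z : ℝ) = g z := fun z => rfl
  set L : {x // x ∈ Z} → ℝ := fun z => nxt Z (z : ℝ) - (z : ℝ) with hL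
  have hLσ : ∀ z, L (σ z) = L z := fun z => by
    show nxt Z (σ z : ℝ) - (σ z : ℝ) = nxt Z (z : ℝ) - (z : ℝ)
    rw [hσ]
    exact hgs.len_eq z.2
  have hLθ : ∀ z, L (theta σ z) = L z := theta_invariant σ L hLσ
  have hLθs : ∀ z, L ((theta σ).symm z) = L z := theta_symm_invariant σ L hLσ
  have hpcLen : ∀ p : {x // x ∈ Z} × Bool, pcLen Z p = L p.1 / 2 := fun p => rfl
  -- length preservation
  have hπg : LenPres Z (Equiv.prodCongr σ (Equiv.refl Bool)) := by
    rintro ⟨z, s⟩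
    show pcLen Z (σ z, s) = pcLen Z (z, s)
    rw [hpcLen, hpcLen]
    simp only [hLσ]
  have hπa : LenPres Z (permA σ) := by
    rintro ⟨z, (_ | _)⟩
    · show pcLen Z (σ z, false) = pcLen Z (z, false)
      rw [hpcLen, hpcLen]
      simp only [hLσ]
    · rfl
  have hπb : LenPres Z (permB σ) := by
    rintro ⟨z, (_ | _)⟩
    · show pcLen Z (theta σ z, true) = pcLen Z (z, false)
      rw [hpcLen, hpcLen]
      simp only [hLθ]
    · show pcLen Z ((theta σ).symm z, false) = pcLen Z (z, true)
      rw [hpcLen, hpcLen]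
      simp only [hLθs]
  -- g is the piecewise translation induced by σ on both levels
  have hgFP : g = FP Z hsub (Equiv.prodCongr σ (Equiv.refl Bool)) hπg := by
    apply Equiv.ext
    intro x
    by_cases hx : x ∈ Set.Ico (0:ℝ) 1
    · obtain ⟨p, hp⟩ := exists_Pc h0 hsub hx
      rw [FP_apply, fF_of_mem hsub hp]
      have hgap : x ∈ Set.Ico (p.1 : ℝ) (nxt Z (p.1 : ℝ)) :=
        Pc_subset_gap (hsub _ p.1.2).2 hp
      have hgx : g x = x + (g p.1 - p.1) := hgs.gap_trans p.1 p.1.2 x hgap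
      have hdiff : pcLeft Z ((Equiv.prodCongr σ (Equiv.refl Bool)) p) - pcLeft Z p
          = g (p.1 : ℝ) - (p.1 : ℝ) := by
        obtain ⟨z, (_ | _)⟩ := p
        · show (σ z : ℝ) - (z : ℝ) = g (z : ℝ) - (z : ℝ)
          rw [hσ]
        · show ((σ z : ℝ) + nxt Z (σ z : ℝ)) / 2 - ((z : ℝ) + nxt Z (z : ℝ)) / 2
            = g (z : ℝ) - (z : ℝ)
          have hlen := hgs.len_eq z.2
          rw [hσ]
          linarith [hlen]
      rw [hgx]
      linarith [hdiff]
    · have hnp : ∀ p, x ∉ Pc Z p := fun p hp => hx (Pc_sub_Ico01 hsub hp)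
      rw [FP_apply, fF_of_not hnp, hgs.fix x hx]
  refine ⟨FP Z hsub (permA σ) hπa, FP Z hsub (permB σ) hπb,
    isIET_FP h0 hsub _ _, isIET_FP h0 hsub _ _, ?_⟩
  have hfinal : FP Z hsub (permA σ) hπa * FP Z hsub (permB σ) hπb *
      (FP Z hsub (permA σ) hπa)⁻¹ * (FP Z hsub (permB σ) hπb)⁻¹ =
      FP Z hsub (Equiv.prodCongr σ (Equiv.refl Bool)) hπg := by
    rw [FP_inv, FP_inv, FP_mul, FP_mul, FP_mul]
    exact FP_congr hsub (comm_eq σ) _ _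
  rw [commutatorElement_def, hfinal]
  exact hgFP


/-! ### Constructing a gap system from a periodic IET -/

lemma perm_mem_Ico_iff (g : Equiv.Perm ℝ) (hfix : ∀ x : ℝ, x ∉ Set.Ico (0:ℝ) 1 → g x = x)
    (x : ℝ) : g x ∈ Set.Ico (0:ℝ) 1 ↔ x ∈ Set.Ico (0:ℝ) 1 := by
  constructor
  · intro hx
    by_contra hc
    rw [hfix x hc] at hx
    exact hc hx
  · intro hx
    by_contra hc
    have h2 : g (g x) = g x := hfix _ hc
    have h3 := g.injective h2
    rw [h3] at hc
    exact hc hx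

lemma zpow_mem_Ico (g : Equiv.Perm ℝ) (hfix : ∀ x : ℝ, x ∉ Set.Ico (0:ℝ) 1 → g x = x) :
    ∀ (n : ℤ) (x : ℝ), x ∈ Set.Ico (0:ℝ) 1 → (g ^ n) x ∈ Set.Ico (0:ℝ) 1 := by
  have hinv : ∀ x : ℝ, x ∈ Set.Ico (0:ℝ) 1 → g⁻¹ x ∈ Set.Ico (0:ℝ) 1 := by
    intro x hx
    apply (perm_mem_Ico_iff g hfix (g⁻¹ x)).mp
    rwa [Equiv.Perm.apply_inv_self]
  intro n
  induction n using Int.induction_on with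
  | zero => intro x hx; simpa using hx
  | succ k ih =>
    intro x hx
    have h : (g ^ ((k : ℤ) + 1)) x = g ((g ^ (k : ℤ)) x) := by
      rw [add_comm, zpow_add, zpow_one, Equiv.Perm.mul_apply]
    rw [h]
    exact (perm_mem_Ico_iff g hfix _).mpr (ih x hx)
  | pred k ih =>
    intro x hx
    have h : (g ^ (-(k : ℤ) - 1)) x = g⁻¹ ((g ^ (-(k : ℤ))) x) := by
      rw [sub_eq_add_neg, add_comm, zpow_add, zpow_neg_one, Equiv.Perm.mul_apply]
    rw [h]
    exact hinv _ (ih x hx)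

lemma find_piece {m : ℕ} {A : Fin (m + 2) → ℝ} (hA0 : A 0 = 0)
    (hA1 : A (Fin.last (m + 1)) = 1) (hmono : StrictMono A) {y : ℝ}
    (hy : y ∈ Set.Ico (0:ℝ) 1) :
    ∃ i : Fin (m + 1), A i.castSucc ≤ y ∧ y < A i.succ := by
  set T := Finset.univ.filter (fun k : Fin (m + 2) => A k ≤ y) with hT
  have hTne : T.Nonempty := ⟨0, Finset.mem_filter.mpr ⟨Finset.mem_univ _, by rw [hA0]; exact hy.1⟩⟩
  set j := T.max' hTne with hj
  have hjy : A j ≤ y := (Finset.mem_filter.mp (T.max'_mem hTne)).2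
  have hjne : j ≠ Fin.last (m + 1) := by
    intro he
    rw [he, hA1] at hjy
    linarith [hy.2]
  have hjlt : (j : ℕ) < m + 1 := by
    have h1 : (j : ℕ) < m + 2 := j.isLt
    have h2 : (j : ℕ) ≠ m + 1 := fun hc => hjne (Fin.ext hc)
    omega
  refine ⟨⟨(j : ℕ), hjlt⟩, ?_, ?_⟩
  · have he : (⟨(j : ℕ), hjlt⟩ : Fin (m + 1)).castSucc = j := Fin.ext rfl
    rw [he]
    exact hjy
  · by_contra hc
    push_neg at hc
    have hmem : (⟨(j : ℕ), hjlt⟩ : Fin (m + 1)).succ ∈ T :=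
      Finset.mem_filter.mpr ⟨Finset.mem_univ _, hc⟩
    have hle := T.le_max' _ hmem
    have hlt : j < (⟨(j : ℕ), hjlt⟩ : Fin (m + 1)).succ := by
      rw [Fin.lt_def]
      simp
    rw [← hj] at hle
    exact absurd hlt (not_lt.mpr hle)

lemma exists_GS (g : Equiv.Perm ℝ) (hg : IsIET g) (hper : IsPeriodicPerm g) :
    ∃ Z : Finset ℝ, GS g Z := by
  obtain ⟨hfix, m, A, hA0, hA1, hmono, hc⟩ := hg
  have hfin : (⋃ i : Fin (m + 1), Set.range fun n : ℤ => (g ^ n) (A i.castSucc)).Finite :=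
    Set.finite_iUnion fun i => hper _
  refine ⟨hfin.toFinset, ?_⟩
  have hmem : ∀ y : ℝ, y ∈ hfin.toFinset ↔
      ∃ (i : Fin (m + 1)) (n : ℤ), (g ^ n) (A i.castSucc) = y := by
    intro y
    rw [Set.Finite.mem_toFinset]
    simp only [Set.mem_iUnion, Set.mem_range]
  have hAIco : ∀ i : Fin (m + 1), A i.castSucc ∈ Set.Ico (0:ℝ) 1 := fun i => by
    constructor
    · rw [← hA0]
      exact hmono.monotone (Fin.zero_le _)
    · rw [← hA1]
      exact hmono (Fin.castSucc_lt_last i)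
  have hsub : ∀ z ∈ hfin.toFinset, z ∈ Set.Ico (0:ℝ) 1 := by
    intro z hz
    obtain ⟨i, n, rfl⟩ := (hmem z).mp hz
    exact zpow_mem_Ico g hfix n _ (hAIco i)
  have hbrk : ∀ i : Fin (m + 1), A i.castSucc ∈ hfin.toFinset := fun i =>
    (hmem _).mpr ⟨i, 0, by simp⟩
  have h0 : (0:ℝ) ∈ hfin.toFinset := by
    have h1 := hbrk 0
    rwa [Fin.castSucc_zero, hA0] at h1
  refine ⟨h0, hsub, hfix, ?_, ?_, ?_⟩
  · intro z hz
    obtain ⟨i, n, rfl⟩ := (hmem z).mp hz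
    refine (hmem _).mpr ⟨i, 1 + n, ?_⟩
    rw [zpow_add, zpow_one, Equiv.Perm.mul_apply]
  · intro z hz
    obtain ⟨i, n, rfl⟩ := (hmem z).mp hz
    refine (hmem _).mpr ⟨i, -1 + n, ?_⟩
    rw [zpow_add, zpow_neg_one, Equiv.Perm.mul_apply]
  · intro z hz x hx
    have hzI : z ∈ Set.Ico (0:ℝ) 1 := hsub z hz
    obtain ⟨i, hi1, hi2⟩ := find_piece hA0 hA1 hmono hzI
    obtain ⟨c, hcc⟩ := hc i
    have hz1 : z < 1 := hzI.2
    have hnle : nxt hfin.toFinset z ≤ A i.succ := by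
      apply nxt_le hz1 ?_ hi2
      by_cases hlast : i.succ = Fin.last (m + 1)
      · rw [hlast, hA1]
        exact Finset.mem_insert_self _ _
      · apply Finset.mem_insert_of_mem
        have hval : (i.succ : ℕ) < m + 1 := by
          have h1 : (i.succ : ℕ) < m + 2 := i.succ.isLt
          have h2 : (i.succ : ℕ) ≠ m + 1 := fun hcc2 => hlast (Fin.ext hcc2)
          omega
        refine (hmem _).mpr ⟨⟨(i.succ : ℕ), hval⟩, 0, ?_⟩
        have he : (⟨(i.succ : ℕ), hval⟩ : Fin (m + 1)).castSucc = i.succ := Fin.ext rfl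
        rw [he]
        simp
    have hxI : x ∈ Set.Ico (A i.castSucc) (A i.succ) :=
      ⟨le_trans hi1 hx.1, lt_of_lt_of_le hx.2 hnle⟩
    rw [hcc x hxI, hcc z ⟨hi1, hi2⟩]
    ring

end

end PeriodicIETProof

/-- Every periodic interval exchange transformation is a commutator in `𝒢`. -/
theorem periodic_IET_is_commutator (g : Equiv.Perm ℝ) (hg : IsIET g)
    (hper : IsPeriodicPerm g) :
    ∃ a b : Equiv.Perm ℝ, IsIET a ∧ IsIET b ∧ g = ⁅a, b⁆ := by
  obtain ⟨Z, hgs⟩ := PeriodicIETProof.exists_GS g hg hper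
  exact hgs.commutator
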